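/- Let T > 0, let Ω_on ⊂ ℝ be measurable, let q_on ∈ L^∞([0,T]; ℝ_{≥0}), and let ω, ω̃ ∈ L¹(ℝ; ℝ_{≥0}) with ‖ω‖_{L¹(ℝ)} = 1. Let ρ, ρ̃ : [0,T] × ℝ → [0,1] be such that ρ(t,·), ρ̃(t,·) ∈ L¹(ℝ) for a.e. t, with t ↦ ‖ρ(t,·) − ρ̃(t,·)‖_{L¹(ℝ)} and t ↦ ‖ρ̃(t,·)‖_{L¹(ℝ)} integrable on [0,T]. Set R(t,x) = (ρ(t,·)∗ω)(x) and R̃(t,x) = (ρ̃(t,·)∗ω̃)(x). Then ∫₀^T ∫_{Ω_on} |q_on(t)(1 − ρ(t,x))(1 − R(t,x)) − q_on(t)(1 − ρ(t,x))(1 − R̃(t,x))| dx dt ≤ ‖q_on‖_{L^∞([0,T])} ∫₀^T ‖ρ(t,·) − ρ̃(t,·)‖_{L¹(ℝ)} dt + ‖q_on‖_{L^∞([0,T])} ‖ω − ω̃‖_{L¹(ℝ)} ∫₀^T ‖ρ̃(t,·)‖_{L¹(ℝ)} dt. -/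

import Mathlib

open MeasureTheory Set
open scoped Convolution ENNReal NNReal

/-- Correlation-type convolution: `(f∗g)(x) = ∫ f(y) g(y − x) dy`. -/
noncomputable def conv (f g : ℝ → ℝ) (x : ℝ) : ℝ := ∫ y, f y * g (y - x)

lemma conv_eq_convolution (f g : ℝ → ℝ) :
    conv f g = (f ⋆[ContinuousLinearMap.mul ℝ ℝ, volume] fun z => g (-z)) := by
  funext x
  simp only [conv, convolution_def, ContinuousLinearMap.mul_apply', neg_sub]

lemma conv_integrable {f g : ℝ → ℝ} (hf : Integrable f) (hg : Integrable g) :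
    Integrable (conv f g) := by
  rw [conv_eq_convolution]
  exact hf.integrable_convolution _ hg.comp_neg

lemma conv_integral {f g : ℝ → ℝ} (hf : Integrable f) (hg : Integrable g) :
    ∫ x, conv f g x = (∫ x, f x) * (∫ x, g x) := by
  rw [conv_eq_convolution, integral_convolution (ContinuousLinearMap.mul ℝ ℝ) hf hg.comp_neg,
    ContinuousLinearMap.mul_apply', integral_neg_eq_self]

lemma abs_int_le (f : ℝ → ℝ) : |∫ x, f x| ≤ ∫ x, |f x| := by
  simpa [Real.norm_eq_abs] using norm_integral_le_integral_norm f

/-- Bound on the contribution `S̃¹_on` coming from the two different nonlocal means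
`R = ρ∗ω` and `R̃ = ρ̃∗ω̃`:
`∫₀^T ∫_{Ω_on} |q_on(1−ρ)(1−R) − q_on(1−ρ)(1−R̃)| ≤
  ‖q_on‖_{L∞} ∫₀^T ‖ρ(t)−ρ̃(t)‖_{L¹} dt + ‖q_on‖_{L∞} ‖ω−ω̃‖_{L¹} ∫₀^T ‖ρ̃(t)‖_{L¹} dt`. -/
theorem Son1_bound
    (T : ℝ) (hT : 0 < T) (Ωon : Set ℝ) (hΩon : MeasurableSet Ωon)
    (qon : ℝ → ℝ) (hqon_nonneg : ∀ t, 0 ≤ qon t)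
    (hqon : MemLp qon ⊤ (volume.restrict (Icc 0 T)))
    (ω ω' : ℝ → ℝ) (hω_nonneg : ∀ x, 0 ≤ ω x) (hω'_nonneg : ∀ x, 0 ≤ ω' x)
    (hω : Integrable ω) (hω' : Integrable ω')
    (hω_norm : (∫ x, |ω x|) = 1)
    (ρ ρ' : ℝ → ℝ → ℝ)
    (hρ01 : ∀ t x, ρ t x ∈ Icc (0:ℝ) 1) (hρ'01 : ∀ t x, ρ' t x ∈ Icc (0:ℝ) 1)
    (hρ_int : ∀ᵐ t ∂(volume.restrict (Icc 0 T)), Integrable (ρ t))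
    (hρ'_int : ∀ᵐ t ∂(volume.restrict (Icc 0 T)), Integrable (ρ' t))
    (hdiff_int : IntegrableOn (fun t => ∫ x, |ρ t x - ρ' t x|) (Icc 0 T))
    (hρ'_L1_int : IntegrableOn (fun t => ∫ x, |ρ' t x|) (Icc 0 T)) :
    (∫ t in Icc 0 T, ∫ x in Ωon,
        |qon t * (1 - ρ t x) * (1 - conv (ρ t) ω x)
          - qon t * (1 - ρ t x) * (1 - conv (ρ' t) ω' x)|) ≤
      essSup qon (volume.restrict (Icc 0 T)) * (∫ t in Icc 0 T, ∫ x, |ρ t x - ρ' t x|)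
      + essSup qon (volume.restrict (Icc 0 T)) * (∫ x, |ω x - ω' x|)
          * (∫ t in Icc 0 T, ∫ x, |ρ' t x|) := by
  set μT := volume.restrict (Icc (0:ℝ) T) with hμT
  set Q := essSup qon μT with hQ
  have hC0 : 0 ≤ ∫ x, |ω x - ω' x| := integral_nonneg fun x => abs_nonneg _
  have hA0 : ∀ t, 0 ≤ ∫ x, |ρ t x - ρ' t x| := fun t => integral_nonneg fun x => abs_nonneg _
  have hB0 : ∀ t, 0 ≤ ∫ x, |ρ' t x| := fun t => integral_nonneg fun x => abs_nonneg _
  -- the essential bound on qon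
  have hS_lt : eLpNormEssSup qon μT < ⊤ := by
    have := hqon.2
    rwa [eLpNorm_exponent_top] at this
  have hq_bdd : ∀ᵐ t ∂μT, qon t ≤ (eLpNormEssSup qon μT).toReal := by
    filter_upwards [ae_le_eLpNormEssSup (f := qon) (μ := μT)] with t ht
    have h2 : ((‖qon t‖₊ : ℝ≥0∞)).toReal ≤ (eLpNormEssSup qon μT).toReal :=
      ENNReal.toReal_mono hS_lt.ne ht
    calc qon t ≤ |qon t| := le_abs_self _
      _ = ((‖qon t‖₊ : ℝ≥0∞)).toReal := by simp [Real.norm_eq_abs]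
      _ ≤ (eLpNormEssSup qon μT).toReal := h2
  have hbdd : Filter.IsBoundedUnder (· ≤ ·) (ae μT) qon :=
    ⟨(eLpNormEssSup qon μT).toReal, Filter.eventually_map.2 hq_bdd⟩
  have hq_le_Q : ∀ᵐ t ∂μT, qon t ≤ Q := ae_le_essSup hbdd
  -- nonnegativity helpers
  have habs_nonneg : ∀ t, 0 ≤ ∫ x in Ωon,
      |qon t * (1 - ρ t x) * (1 - conv (ρ t) ω x)
        - qon t * (1 - ρ t x) * (1 - conv (ρ' t) ω' x)| :=
    fun t => integral_nonneg fun x => abs_nonneg _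
  -- key a.e. pointwise-in-t bound
  have key : ∀ᵐ t ∂μT,
      (∫ x in Ωon, |qon t * (1 - ρ t x) * (1 - conv (ρ t) ω x)
          - qon t * (1 - ρ t x) * (1 - conv (ρ' t) ω' x)|)
        ≤ qon t * ((∫ x, |ρ t x - ρ' t x|) + (∫ x, |ω x - ω' x|) * (∫ x, |ρ' t x|)) := by
    filter_upwards [hρ_int, hρ'_int] with t hρt hρ't
    have hd_int : Integrable (fun y => |ρ t y - ρ' t y|) := (hρt.sub hρ't).abs
    have he_int : Integrable (fun z => |ω z - ω' z|) := (hω.sub hω').abs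
    have hg1 : Integrable (conv (fun y => |ρ t y - ρ' t y|) ω) := conv_integrable hd_int hω
    have hg2 : Integrable (conv (fun y => |ρ' t y|) (fun z => |ω z - ω' z|)) :=
      conv_integrable hρ't.abs he_int
    have hg1_nonneg : ∀ x, 0 ≤ conv (fun y => |ρ t y - ρ' t y|) ω x :=
      fun x => integral_nonneg fun y => mul_nonneg (abs_nonneg _) (hω_nonneg _)
    have hg2_nonneg : ∀ x, 0 ≤ conv (fun y => |ρ' t y|) (fun z => |ω z - ω' z|) x :=
      fun x => integral_nonneg fun y => mul_nonneg (abs_nonneg _) (abs_nonneg _)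
    -- pointwise-in-x bound
    have hptb : ∀ x, |qon t * (1 - ρ t x) * (1 - conv (ρ t) ω x)
          - qon t * (1 - ρ t x) * (1 - conv (ρ' t) ω' x)|
        ≤ qon t * (conv (fun y => |ρ t y - ρ' t y|) ω x
            + conv (fun y => |ρ' t y|) (fun z => |ω z - ω' z|) x) := by
      intro x
      have h1 : Integrable (fun y => ρ t y * ω (y - x)) :=
        Integrable.bdd_mul (c := 1) (hω.comp_sub_right x) hρt.1
          (ae_of_all _ fun y => by
            rw [Real.norm_eq_abs, abs_of_nonneg (hρ01 t y).1]; exact (hρ01 t y).2)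
      have h2 : Integrable (fun y => ρ' t y * ω' (y - x)) :=
        Integrable.bdd_mul (c := 1) (hω'.comp_sub_right x) hρ't.1
          (ae_of_all _ fun y => by
            rw [Real.norm_eq_abs, abs_of_nonneg (hρ'01 t y).1]; exact (hρ'01 t y).2)
      have h3 : Integrable (fun y => ρ' t y * ω (y - x)) :=
        Integrable.bdd_mul (c := 1) (hω.comp_sub_right x) hρ't.1
          (ae_of_all _ fun y => by
            rw [Real.norm_eq_abs, abs_of_nonneg (hρ'01 t y).1]; exact (hρ'01 t y).2)
      -- splitting of the difference of convolutions
      have hsplit : conv (ρ t) ω x - conv (ρ' t) ω' x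
          = (∫ y, (ρ t y - ρ' t y) * ω (y - x)) + ∫ y, ρ' t y * (ω (y - x) - ω' (y - x)) := by
        have e1 : (∫ y, (ρ t y - ρ' t y) * ω (y - x))
            = (∫ y, ρ t y * ω (y - x)) - ∫ y, ρ' t y * ω (y - x) := by
          simp_rw [sub_mul]; exact integral_sub h1 h3
        have e2 : (∫ y, ρ' t y * (ω (y - x) - ω' (y - x)))
            = (∫ y, ρ' t y * ω (y - x)) - ∫ y, ρ' t y * ω' (y - x) := by
          simp_rw [mul_sub]; exact integral_sub h3 h2
        simp only [conv, e1, e2]; ring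
      have hsplit_abs : |conv (ρ t) ω x - conv (ρ' t) ω' x|
          ≤ conv (fun y => |ρ t y - ρ' t y|) ω x
            + conv (fun y => |ρ' t y|) (fun z => |ω z - ω' z|) x := by
        rw [hsplit]
        refine (abs_add_le _ _).trans (add_le_add ?_ ?_)
        · refine (abs_int_le _).trans (le_of_eq ?_)
          simp only [conv]
          refine integral_congr_ae (ae_of_all _ fun y => ?_)
          simp [abs_mul, abs_of_nonneg (hω_nonneg _)]
        · refine (abs_int_le _).trans (le_of_eq ?_)
          simp only [conv]
          refine integral_congr_ae (ae_of_all _ fun y => ?_)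
          simp [abs_mul]
      -- assemble the pointwise bound
      have e0 : qon t * (1 - ρ t x) * (1 - conv (ρ t) ω x)
          - qon t * (1 - ρ t x) * (1 - conv (ρ' t) ω' x)
          = qon t * (1 - ρ t x) * (conv (ρ' t) ω' x - conv (ρ t) ω x) := by ring
      have h01 : 0 ≤ 1 - ρ t x := by linarith [(hρ01 t x).2]
      have h01' : 1 - ρ t x ≤ 1 := by linarith [(hρ01 t x).1]
      rw [e0, abs_mul, abs_of_nonneg (mul_nonneg (hqon_nonneg t) h01), abs_sub_comm]
      calc qon t * (1 - ρ t x) * |conv (ρ t) ω x - conv (ρ' t) ω' x|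
          ≤ qon t * 1 * |conv (ρ t) ω x - conv (ρ' t) ω' x| := by
            have := mul_le_mul_of_nonneg_left h01' (hqon_nonneg t)
            exact mul_le_mul_of_nonneg_right this (abs_nonneg _)
        _ = qon t * |conv (ρ t) ω x - conv (ρ' t) ω' x| := by ring
        _ ≤ qon t * (conv (fun y => |ρ t y - ρ' t y|) ω x
            + conv (fun y => |ρ' t y|) (fun z => |ω z - ω' z|) x) :=
            mul_le_mul_of_nonneg_left hsplit_abs (hqon_nonneg t)
    -- integrate the pointwise bound over Ωon, then over ℝ
    have hint : Integrable (fun x => qon t * (conv (fun y => |ρ t y - ρ' t y|) ω x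
        + conv (fun y => |ρ' t y|) (fun z => |ω z - ω' z|) x)) := (hg1.add hg2).const_mul _
    have hω_int_one : (∫ x, ω x) = 1 := by
      rw [← hω_norm]
      exact integral_congr_ae (ae_of_all _ fun x => (abs_of_nonneg (hω_nonneg x)).symm)
    calc (∫ x in Ωon, |qon t * (1 - ρ t x) * (1 - conv (ρ t) ω x)
          - qon t * (1 - ρ t x) * (1 - conv (ρ' t) ω' x)|)
        ≤ ∫ x in Ωon, qon t * (conv (fun y => |ρ t y - ρ' t y|) ω x
            + conv (fun y => |ρ' t y|) (fun z => |ω z - ω' z|) x) :=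
          integral_mono_of_nonneg (ae_of_all _ fun x => abs_nonneg _)
            hint.integrableOn (ae_of_all _ hptb)
      _ ≤ ∫ x, qon t * (conv (fun y => |ρ t y - ρ' t y|) ω x
            + conv (fun y => |ρ' t y|) (fun z => |ω z - ω' z|) x) :=
          setIntegral_le_integral hint (ae_of_all _ fun x =>
            mul_nonneg (hqon_nonneg t) (add_nonneg (hg1_nonneg x) (hg2_nonneg x)))
      _ = qon t * ((∫ x, |ρ t x - ρ' t x|) + (∫ x, |ω x - ω' x|) * (∫ x, |ρ' t x|)) := by
          rw [integral_const_mul, integral_add hg1 hg2, conv_integral hd_int hω,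
            conv_integral hρ't.abs he_int, hω_int_one]
          ring
  -- integrability of the t-dependent bound
  have hAB_int : Integrable (fun t => (∫ x, |ρ t x - ρ' t x|)
      + (∫ x, |ω x - ω' x|) * (∫ x, |ρ' t x|)) μT :=
    hdiff_int.add (hρ'_L1_int.const_mul _)
  have hGint : Integrable (fun t => qon t * ((∫ x, |ρ t x - ρ' t x|)
      + (∫ x, |ω x - ω' x|) * (∫ x, |ρ' t x|))) μT := by
    refine Integrable.bdd_mul (c := (eLpNormEssSup qon μT).toReal) hAB_int
      hqon.aestronglyMeasurable ?_
    filter_upwards [hq_bdd] with t ht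
    rw [Real.norm_eq_abs, abs_of_nonneg (hqon_nonneg t)]
    exact ht
  calc (∫ t in Icc 0 T, ∫ x in Ωon,
        |qon t * (1 - ρ t x) * (1 - conv (ρ t) ω x)
          - qon t * (1 - ρ t x) * (1 - conv (ρ' t) ω' x)|)
      ≤ ∫ t in Icc 0 T, qon t * ((∫ x, |ρ t x - ρ' t x|)
          + (∫ x, |ω x - ω' x|) * (∫ x, |ρ' t x|)) :=
        integral_mono_of_nonneg (ae_of_all _ fun t => habs_nonneg t) hGint key
    _ ≤ ∫ t in Icc 0 T, Q * ((∫ x, |ρ t x - ρ' t x|)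
          + (∫ x, |ω x - ω' x|) * (∫ x, |ρ' t x|)) := by
        refine integral_mono_of_nonneg
          (ae_of_all _ fun t => mul_nonneg (hqon_nonneg t)
            (add_nonneg (hA0 t) (mul_nonneg hC0 (hB0 t))))
          (hAB_int.const_mul Q) ?_
        filter_upwards [hq_le_Q] with t ht
        exact mul_le_mul_of_nonneg_right ht (add_nonneg (hA0 t) (mul_nonneg hC0 (hB0 t)))
    _ = Q * (∫ t in Icc 0 T, ∫ x, |ρ t x - ρ' t x|)
        + Q * (∫ x, |ω x - ω' x|) * (∫ t in Icc 0 T, ∫ x, |ρ' t x|) := by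
        rw [integral_const_mul, integral_add hdiff_int (hρ'_L1_int.const_mul _),
          integral_const_mul]
        ring
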